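/- Path weight factorization lemma: for composable paths γ₁ (ending at w) and γ₂ (starting at w) on a finite graph, W(γ₁ * γ₂, t) = ∫₀^t W(γ̄₁, τ) W(γ₂, t−τ) dτ, where γ̄₁ denotes γ₁ with its last vertex dropped and W(γ,t) is the simplex-integral path weight. -/

import Mathlib

open MeasureTheory Real
open scoped ENNReal

namespace PWaux

/-- The open simplex `{s | 0 < sᵢ, ∑ sᵢ < t}`. -/
def simplex (n : ℕ) (t : ℝ) : Set (Fin n → ℝ) := {s | (∀ i, 0 < s i) ∧ ∑ i, s i < t}

lemma measurableSet_simplex (n : ℕ) (t : ℝ) : MeasurableSet (simplex n t) := by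
  have : simplex n t = (⋂ i, {s : Fin n → ℝ | 0 < s i}) ∩ {s | ∑ i, s i < t} := by
    ext s; simp [simplex, Set.mem_iInter]
  rw [this]
  exact (MeasurableSet.iInter fun i =>
      measurableSet_lt measurable_const (measurable_pi_apply i)).inter
    (measurableSet_lt (Finset.measurable_sum _ fun i _ => measurable_pi_apply i) measurable_const)

/-- The `lintegral` version of the path weight, with abstract degrees. -/
noncomputable def core (n : ℕ) (c : ℝ) (d : Fin n → ℝ) (t : ℝ) : ℝ≥0∞ :=
  ∫⁻ s in simplex n t,
    ENNReal.ofReal (Real.exp (-((t - ∑ i, s i) * c + ∑ i, s i * d i)))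

lemma simplex_eq_empty (n : ℕ) {t : ℝ} (ht : t ≤ 0) : simplex n t = ∅ := by
  ext s
  simp only [simplex, Set.mem_setOf_eq, Set.mem_empty_iff_false, iff_false, not_and]
  intro hs hsum
  have : (0:ℝ) ≤ ∑ i, s i := Finset.sum_nonneg fun i _ => (hs i).le
  linarith

lemma core_of_nonpos (n : ℕ) (c : ℝ) (d : Fin n → ℝ) {t : ℝ} (ht : t ≤ 0) :
    core n c d t = 0 := by
  rw [core, simplex_eq_empty n ht]
  simp

lemma core_zero (c : ℝ) (d : Fin 0 → ℝ) (τ : ℝ) :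
    core 0 c d τ = if 0 < τ then ENNReal.ofReal (Real.exp (-(τ * c))) else 0 := by
  by_cases h : 0 < τ
  · rw [if_pos h, core]
    have hs : simplex 0 τ = Set.univ := by
      ext s; simp [simplex, h]
    rw [hs, Measure.restrict_univ]
    simp [Finset.univ_eq_empty, lintegral_const, volume_pi, Measure.pi_univ]
  · rw [if_neg h]
    exact core_of_nonpos _ _ _ (not_lt.mp h)

lemma core_congr {n : ℕ} {c c' : ℝ} {d d' : Fin n → ℝ} (hc : c = c')
    (hd : ∀ i, d i = d' i) (t : ℝ) : core n c d t = core n c' d' t := by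
  subst hc
  rw [show d = d' from funext hd]

lemma core_lt_top (n : ℕ) {c : ℝ} {d : Fin n → ℝ} (hc : 0 ≤ c) (hd : ∀ i, 0 ≤ d i)
    (t : ℝ) : core n c d t < ⊤ := by
  rcases le_or_gt t 0 with ht | ht
  · simp [core_of_nonpos n c d ht]
  have hb : core n c d t ≤ ∫⁻ _ in simplex n t, 1 := by
    apply setLIntegral_mono measurable_const
    intro s hs
    rcases hs with ⟨hpos, hsum⟩
    have h1 : (0:ℝ) ≤ ∑ i, s i := Finset.sum_nonneg fun i _ => (hpos i).le
    have h2 : (0:ℝ) ≤ ∑ i, s i * d i :=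
      Finset.sum_nonneg fun i _ => mul_nonneg (hpos i).le (hd i)
    have : Real.exp (-((t - ∑ i, s i) * c + ∑ i, s i * d i)) ≤ 1 := by
      rw [Real.exp_le_one_iff]
      have : 0 ≤ (t - ∑ i, s i) * c := mul_nonneg (by linarith) hc
      linarith
    calc ENNReal.ofReal (Real.exp (-((t - ∑ i, s i) * c + ∑ i, s i * d i)))
        ≤ ENNReal.ofReal 1 := ENNReal.ofReal_le_ofReal this
      _ = 1 := ENNReal.ofReal_one
  rw [setLIntegral_one] at hb
  have hsub : simplex n t ⊆ Set.univ.pi fun _ : Fin n => Set.Ioo (0:ℝ) t := by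
    intro s hs
    rcases hs with ⟨hpos, hsum⟩
    intro i _
    refine ⟨hpos i, lt_of_le_of_lt ?_ hsum⟩
    exact Finset.single_le_sum (fun j _ => (hpos j).le) (Finset.mem_univ i)
  have : volume (simplex n t) ≤ volume (Set.univ.pi fun _ : Fin n => Set.Ioo (0:ℝ) t) :=
    measure_mono hsub
  rw [volume_pi_pi] at this
  refine lt_of_le_of_lt hb (lt_of_le_of_lt this ?_)
  simp only [Real.volume_Ioo, Finset.prod_const]
  exact ENNReal.pow_lt_top ENNReal.ofReal_lt_top

lemma measurable_core (n : ℕ) (c : ℝ) (d : Fin n → ℝ) : Measurable (core n c d) := by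
  set F : ℝ × (Fin n → ℝ) → ℝ≥0∞ := fun p =>
    ({p : ℝ × (Fin n → ℝ) | (∀ i, 0 < p.2 i) ∧ ∑ i, p.2 i < p.1}.indicator
      (fun p => ENNReal.ofReal (Real.exp (-((p.1 - ∑ i, p.2 i) * c + ∑ i, p.2 i * d i)))) p)
    with hFdef
  have hsum : Measurable fun p : ℝ × (Fin n → ℝ) => ∑ i, p.2 i :=
    Finset.measurable_sum _ fun i _ => (measurable_pi_apply i).comp measurable_snd
  have hset : MeasurableSet {p : ℝ × (Fin n → ℝ) | (∀ i, 0 < p.2 i) ∧ ∑ i, p.2 i < p.1} := by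
    have : {p : ℝ × (Fin n → ℝ) | (∀ i, 0 < p.2 i) ∧ ∑ i, p.2 i < p.1}
        = (⋂ i, {p : ℝ × (Fin n → ℝ) | 0 < p.2 i}) ∩ {p | ∑ i, p.2 i < p.1} := by
      ext p; simp [Set.mem_iInter]
    rw [this]
    exact (MeasurableSet.iInter fun i =>
        ((measurable_pi_apply i).comp measurable_snd) measurableSet_Ioi).inter
      (measurableSet_lt hsum measurable_fst)
  have hsum2 : Measurable fun p : ℝ × (Fin n → ℝ) => ∑ i, p.2 i * d i :=
    Finset.measurable_sum _ fun i _ =>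
      ((measurable_pi_apply i).comp measurable_snd).mul_const _
  have hF : Measurable F := by
    apply Measurable.indicator _ hset
    exact (Real.measurable_exp.comp
      ((((measurable_fst.sub hsum).mul_const c).add hsum2).neg)).ennreal_ofReal
  have key : ∀ t, core n c d t = ∫⁻ s, F (t, s) := by
    intro t
    rw [core, ← lintegral_indicator (measurableSet_simplex n t)]
    rfl
  have h2 := Measurable.lintegral_prod_right (ν := (volume : Measure (Fin n → ℝ))) (f := fun t s => F (t, s)) hF
  rw [show core n c d = fun t => ∫⁻ s, F (t, s) from funext key]
  exact h2

lemma core_succ (n : ℕ) (c : ℝ) (d : Fin (n + 1) → ℝ) (t : ℝ) :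
    core (n + 1) c d t = ∫⁻ σ in Set.Ioo (0:ℝ) t,
      ENNReal.ofReal (Real.exp (-((t - σ) * c))) * core n (d 0) (d ∘ Fin.succ) σ := by
  classical
  set G : ℝ × (Fin n → ℝ) → ℝ≥0∞ := fun p =>
    if (0 < p.1 ∧ ∀ j, 0 < p.2 j) ∧ p.1 + ∑ j, p.2 j < t then
      ENNReal.ofReal (Real.exp (-((t - (p.1 + ∑ j, p.2 j)) * c
        + (p.1 * d 0 + ∑ j, p.2 j * (d ∘ Fin.succ) j))))
    else 0 with hGdef
  have hsum : Measurable fun p : ℝ × (Fin n → ℝ) => ∑ j, p.2 j :=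
    Finset.measurable_sum _ fun j _ => (measurable_pi_apply j).comp measurable_snd
  have hsum2 : Measurable fun p : ℝ × (Fin n → ℝ) => ∑ j, p.2 j * (d ∘ Fin.succ) j :=
    Finset.measurable_sum _ fun j _ =>
      ((measurable_pi_apply j).comp measurable_snd).mul_const _
  have hGmeas : Measurable G := by
    rw [hGdef]
    apply Measurable.ite
    · have : {p : ℝ × (Fin n → ℝ) | (0 < p.1 ∧ ∀ j, 0 < p.2 j) ∧ p.1 + ∑ j, p.2 j < t}
          = (({p : ℝ × (Fin n → ℝ) | 0 < p.1} ∩ ⋂ j, {p : ℝ × (Fin n → ℝ) | 0 < p.2 j})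
            ∩ {p : ℝ × (Fin n → ℝ) | p.1 + ∑ j, p.2 j < t}) := by
        ext p; simp [Set.mem_iInter, and_assoc]
      rw [this]
      exact (((measurable_fst measurableSet_Ioi).inter (MeasurableSet.iInter fun j =>
          ((measurable_pi_apply j).comp measurable_snd) measurableSet_Ioi)).inter
        (measurableSet_lt (measurable_fst.add hsum) measurable_const))
    · exact (Real.measurable_exp.comp
        ((((measurable_const.sub (measurable_fst.add hsum)).mul_const c).add
          ((measurable_fst.mul_const _).add hsum2)).neg)).ennreal_ofReal
    · exact measurable_const
  have step1 : core (n+1) c d t = ∫⁻ p : ℝ × (Fin n → ℝ), G p := by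
    rw [core, ← lintegral_indicator (measurableSet_simplex (n+1) t)]
    rw [← (volume_preserving_piFinSuccAbove (fun _ : Fin (n+1) => ℝ) 0).lintegral_comp hGmeas]
    congr 1
    funext s
    have happ : (MeasurableEquiv.piFinSuccAbove (fun _ : Fin (n+1) => ℝ) 0) s
        = (s 0, fun j => s ((0 : Fin (n+1)).succAbove j)) := rfl
    rw [happ, hGdef]
    simp only [Set.indicator_apply, simplex, Set.mem_setOf_eq, Fin.succAbove_zero,
      Fin.forall_fin_succ, Fin.sum_univ_succ, Function.comp]
    exact if_congr Iff.rfl rfl rfl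
  have step3 : ∀ r : Fin n → ℝ, ∫⁻ x, G (x, r) = ∫⁻ σ, G (σ - ∑ j, r j, r) := by
    intro r
    have h := lintegral_add_right_eq_self (μ := (volume : Measure ℝ))
      (fun σ => G (σ - ∑ j, r j, r)) (∑ j, r j)
    calc ∫⁻ x, G (x, r) = ∫⁻ x, G (x + ∑ j, r j - ∑ j, r j, r) := by
          simp [add_sub_cancel_right]
      _ = ∫⁻ σ, G (σ - ∑ j, r j, r) := h
  have hswapmeas : Measurable fun q : (Fin n → ℝ) × ℝ => G (q.2 - ∑ j, q.1 j, q.1) := by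
    apply hGmeas.comp
    exact (measurable_snd.sub
      (Finset.measurable_sum _ fun j _ => (measurable_pi_apply j).comp measurable_fst)).prodMk
      measurable_fst
  have step5 : ∀ σ : ℝ, (∫⁻ r : Fin n → ℝ, G (σ - ∑ j, r j, r))
      = (Set.Ioo (0:ℝ) t).indicator
        (fun σ => ENNReal.ofReal (Real.exp (-((t - σ) * c))) * core n (d 0) (d ∘ Fin.succ) σ) σ := by
    intro σ
    have hval : ∀ r : Fin n → ℝ, G (σ - ∑ j, r j, r)
        = if σ < t then (simplex n σ).indicator (fun r =>
            ENNReal.ofReal (Real.exp (-((t - σ) * c))) *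
            ENNReal.ofReal (Real.exp (-((σ - ∑ j, r j) * d 0 + ∑ j, r j * (d ∘ Fin.succ) j)))) r
          else 0 := by
      intro r
      rw [hGdef]
      simp only []
      rw [sub_add_cancel]
      by_cases hσt : σ < t
      · rw [if_pos hσt]
        by_cases hr : r ∈ simplex n σ
        · rw [if_pos ⟨⟨sub_pos.mpr hr.2, hr.1⟩, hσt⟩, Set.indicator_of_mem hr]
          rw [← ENNReal.ofReal_mul (Real.exp_pos _).le, ← Real.exp_add]
          ring_nf
        · rw [if_neg, Set.indicator_of_notMem hr]
          intro hcon
          exact hr ⟨hcon.1.2, sub_pos.mp hcon.1.1⟩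
      · rw [if_neg (fun hcon => hσt hcon.2), if_neg hσt]
    simp only [hval]
    by_cases hσt : σ < t
    · simp only [if_pos hσt]
      rw [lintegral_indicator (measurableSet_simplex n σ)]
      rw [lintegral_const_mul' _ _ ENNReal.ofReal_ne_top]
      by_cases h0 : 0 < σ
      · rw [Set.indicator_of_mem (Set.mem_Ioo.mpr ⟨h0, hσt⟩)]
        rfl
      · rw [Set.indicator_of_notMem (fun hc => h0 hc.1)]
        rw [show (∫⁻ r in simplex n σ, ENNReal.ofReal
            (Real.exp (-((σ - ∑ j, r j) * d 0 + ∑ j, r j * (d ∘ Fin.succ) j))))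
          = core n (d 0) (d ∘ Fin.succ) σ from rfl]
        rw [core_of_nonpos n _ _ (not_lt.mp h0), mul_zero]
    · simp only [if_neg hσt]
      rw [lintegral_zero,
        Set.indicator_of_notMem (fun hc => hσt hc.2)]
  calc core (n+1) c d t = ∫⁻ p : ℝ × (Fin n → ℝ), G p := step1
    _ = ∫⁻ r : Fin n → ℝ, ∫⁻ x : ℝ, G (x, r) := by
        rw [Measure.volume_eq_prod, lintegral_prod_symm _ hGmeas.aemeasurable]
    _ = ∫⁻ r : Fin n → ℝ, ∫⁻ σ : ℝ, G (σ - ∑ j, r j, r) := by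
        exact lintegral_congr fun r => step3 r
    _ = ∫⁻ σ : ℝ, ∫⁻ r : Fin n → ℝ, G (σ - ∑ j, r j, r) := by
        exact lintegral_lintegral_swap hswapmeas.aemeasurable
    _ = ∫⁻ σ : ℝ, (Set.Ioo (0:ℝ) t).indicator
          (fun σ => ENNReal.ofReal (Real.exp (-((t - σ) * c))) * core n (d 0) (d ∘ Fin.succ) σ) σ := by
        exact lintegral_congr step5
    _ = _ := lintegral_indicator measurableSet_Ioo _

end PWaux

/-- The weight `W(γ,t)` of a path (walk) `γ = (v₀,…,v_k)` in a graph. -/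
noncomputable def pathWeight {V : Type*} [Fintype V] [DecidableEq V]
    (G : SimpleGraph V) [DecidableRel G.Adj] {u v : V} (γ : G.Walk u v) (t : ℝ) : ℝ :=
  ∫ s in {s : Fin γ.length → ℝ | (∀ i, 0 < s i) ∧ ∑ i, s i < t},
    Real.exp (-((t - ∑ i, s i) * (G.degree u : ℝ)
      + ∑ i : Fin γ.length, s i * (G.degree (γ.getVert (i + 1)) : ℝ)))

namespace PWaux

variable {V : Type*} [Fintype V] [DecidableEq V] (G : SimpleGraph V) [DecidableRel G.Adj]

/-- `lintegral` version of `pathWeight`. -/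
noncomputable def Wl {u v : V} (γ : G.Walk u v) (t : ℝ) : ℝ≥0∞ :=
  core γ.length (G.degree u : ℝ) (fun i => (G.degree (γ.getVert (i + 1)) : ℝ)) t

lemma measurable_Wl {u v : V} (γ : G.Walk u v) : Measurable (Wl G γ) :=
  measurable_core _ _ _

lemma Wl_lt_top {u v : V} (γ : G.Walk u v) (t : ℝ) : Wl G γ t < ⊤ :=
  core_lt_top _ (Nat.cast_nonneg _) (fun _ => Nat.cast_nonneg _) t

lemma pathWeight_eq_toReal {u v : V} (γ : G.Walk u v) (t : ℝ) :
    pathWeight G γ t = (Wl G γ t).toReal := by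
  rw [pathWeight, Wl, core]
  rw [integral_eq_lintegral_of_nonneg_ae]
  · rfl
  · exact Filter.Eventually.of_forall fun s => (Real.exp_pos _).le
  · exact (Continuous.aestronglyMeasurable (by continuity)).restrict

lemma measurable_E (D : ℝ) :
    Measurable fun x : ℝ => ENNReal.ofReal (Real.exp (-(x * D))) :=
  (Real.measurable_exp.comp ((measurable_id.mul_const D).neg)).ennreal_ofReal

lemma Wl_cons {u u₂ v : V} (h : G.Adj u u₂) (γ : G.Walk u₂ v) (t : ℝ) :
    Wl G (SimpleGraph.Walk.cons h γ) t
      = ∫⁻ σ in Set.Ioo (0:ℝ) t,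
          ENNReal.ofReal (Real.exp (-((t - σ) * (G.degree u : ℝ)))) * Wl G γ σ := by
  have h0 : Wl G (SimpleGraph.Walk.cons h γ) t
      = core (γ.length + 1) (G.degree u : ℝ)
          (fun i : Fin (γ.length + 1) =>
            (G.degree ((SimpleGraph.Walk.cons h γ).getVert (i + 1)) : ℝ)) t := rfl
  rw [h0, core_succ]
  refine lintegral_congr fun σ => ?_
  congr 1
  exact core_congr
    (by
      have key : ∀ a b : V, a = b → (G.degree a : ℝ) = G.degree b := by rintro a b rfl; rfl
      exact key _ _ (by simp))
    (fun j => by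
      have key : ∀ a b : V, a = b → (G.degree a : ℝ) = G.degree b := by rintro a b rfl; rfl
      exact key _ _ (by simp)) σ

lemma Wl_nil (u : V) (τ : ℝ) :
    Wl G (SimpleGraph.Walk.nil : G.Walk u u) τ
      = if 0 < τ then ENNReal.ofReal (Real.exp (-(τ * (G.degree u : ℝ)))) else 0 :=
  core_zero _ _ τ

lemma lintegral_Ioo_reflect {t : ℝ} (F : ℝ → ℝ≥0∞) (hF : Measurable F) :
    ∫⁻ τ in Set.Ioo (0:ℝ) t, F (t - τ) = ∫⁻ τ in Set.Ioo (0:ℝ) t, F τ := by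
  rw [← lintegral_indicator measurableSet_Ioo, ← lintegral_indicator measurableSet_Ioo]
  have h := (Measure.measurePreserving_sub_left (volume : Measure ℝ) t).lintegral_comp
    (f := (Set.Ioo (0:ℝ) t).indicator F) (hF.indicator measurableSet_Ioo)
  rw [← h]
  apply lintegral_congr
  intro τ
  by_cases hτ : τ ∈ Set.Ioo (0:ℝ) t
  · have h2 : t - τ ∈ Set.Ioo (0:ℝ) t :=
      Set.mem_Ioo.mpr ⟨by linarith [hτ.2], by linarith [hτ.1]⟩
    rw [Set.indicator_of_mem hτ, Set.indicator_of_mem h2]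
  · have h2 : t - τ ∉ Set.Ioo (0:ℝ) t := by
      intro hc
      exact hτ (Set.mem_Ioo.mpr ⟨by linarith [hc.2], by linarith [hc.1]⟩)
    rw [Set.indicator_of_notMem hτ, Set.indicator_of_notMem h2]

lemma Wl_factor {u w' w v : V} (p : G.Walk u w') (h : G.Adj w' w) (q : G.Walk w v) :
    ∀ t : ℝ, Wl G ((p.concat h).append q) t
      = ∫⁻ τ in Set.Ioo (0:ℝ) t, Wl G p τ * Wl G q (t - τ) := by
  induction p with
  | @nil u₀ =>
    intro t
    have hrw : ((SimpleGraph.Walk.nil.concat h).append q) = SimpleGraph.Walk.cons h q := by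
      simp [SimpleGraph.Walk.concat_nil, SimpleGraph.Walk.cons_append]
    rw [hrw, Wl_cons]
    have hFm : Measurable (fun σ : ℝ =>
        ENNReal.ofReal (Real.exp (-((t - σ) * (G.degree u₀ : ℝ)))) * Wl G q σ) :=
      ((Real.measurable_exp.comp
        (((measurable_const.sub measurable_id).mul_const _).neg)).ennreal_ofReal).mul
        (measurable_Wl G q)
    rw [← lintegral_Ioo_reflect _ hFm]
    apply setLIntegral_congr_fun measurableSet_Ioo
    intro τ hτ
    dsimp only
    rw [Wl_nil, if_pos hτ.1, sub_sub_cancel]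
  | @cons u₁ u₂ w₃ h'' p' ih =>
    intro t
    rw [SimpleGraph.Walk.concat_cons, SimpleGraph.Walk.cons_append, Wl_cons]
    set D : ℝ := (G.degree u₁ : ℝ) with hD
    set Wp : ℝ → ℝ≥0∞ := Wl G p' with hWp
    set Wq : ℝ → ℝ≥0∞ := Wl G q with hWq
    have hWpm : Measurable Wp := measurable_Wl G p'
    have hWqm : Measurable Wq := measurable_Wl G q
    set rest := (p'.concat h).append q with hrest
    -- the common double integrand
    set g : ℝ → ℝ → ℝ≥0∞ := fun a b =>
      {x : ℝ × ℝ | (0 < x.1 ∧ 0 < x.2) ∧ x.1 + x.2 < t}.indicator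
        (fun x => Wp x.1 * Wq x.2 * ENNReal.ofReal (Real.exp (-((t - x.1 - x.2) * D)))) (a, b)
      with hg
    have hgmeas : Measurable (Function.uncurry g) := by
      apply Measurable.indicator
      · exact ((hWpm.comp measurable_fst).mul (hWqm.comp measurable_snd)).mul
          ((Real.measurable_exp.comp
            ((((measurable_const.sub measurable_fst).sub measurable_snd).mul_const D).neg)).ennreal_ofReal)
      · exact (((measurable_fst measurableSet_Ioi).inter
          (measurable_snd measurableSet_Ioi)).inter
          (measurableSet_lt (measurable_fst.add measurable_snd) measurable_const))
    -- LHS as double integral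
    set H : ℝ → ℝ → ℝ≥0∞ := fun σ τ =>
      {x : ℝ × ℝ | (0 < x.1 ∧ x.1 < t) ∧ (0 < x.2 ∧ x.2 < x.1)}.indicator
        (fun x => ENNReal.ofReal (Real.exp (-((t - x.1) * D))) * (Wp x.2 * Wq (x.1 - x.2)))
        (σ, τ) with hH
    have hHmeas : Measurable (Function.uncurry H) := by
      apply Measurable.indicator
      · exact ((Real.measurable_exp.comp
            (((measurable_const.sub measurable_fst).mul_const D).neg)).ennreal_ofReal).mul
          ((hWpm.comp measurable_snd).mul
            (hWqm.comp (measurable_fst.sub measurable_snd)))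
      · exact (((measurable_fst measurableSet_Ioi).inter
          (measurableSet_lt measurable_fst measurable_const)).inter
          ((measurable_snd measurableSet_Ioi).inter
            (measurableSet_lt measurable_snd measurable_fst)))
    have claimA : (∫⁻ σ in Set.Ioo (0:ℝ) t,
        ENNReal.ofReal (Real.exp (-((t - σ) * D))) * Wl G rest σ)
        = ∫⁻ a, ∫⁻ b, g a b := by
      rw [← lintegral_indicator measurableSet_Ioo]
      have eq1 : ∀ σ : ℝ, (Set.Ioo (0:ℝ) t).indicator
          (fun σ => ENNReal.ofReal (Real.exp (-((t - σ) * D))) * Wl G rest σ) σ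
          = ∫⁻ τ, H σ τ := by
        intro σ
        by_cases hσ : σ ∈ Set.Ioo (0:ℝ) t
        · rw [Set.indicator_of_mem hσ, ih h σ, ← lintegral_const_mul' _ _ ENNReal.ofReal_ne_top,
            ← lintegral_indicator measurableSet_Ioo]
          apply lintegral_congr
          intro τ
          by_cases hτ : τ ∈ Set.Ioo (0:ℝ) σ
          · rw [Set.indicator_of_mem hτ]
            simp only [hH]
            rw [Set.indicator_of_mem (by exact ⟨⟨hσ.1, hσ.2⟩, ⟨hτ.1, hτ.2⟩⟩)]
          · rw [Set.indicator_of_notMem hτ]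
            simp only [hH]
            rw [Set.indicator_of_notMem (fun hc => hτ (Set.mem_Ioo.mpr hc.2))]
        · rw [Set.indicator_of_notMem hσ]
          have hz : ∀ τ : ℝ, H σ τ = 0 := by
            intro τ
            simp only [hH]
            exact Set.indicator_of_notMem (fun hc => hσ (Set.mem_Ioo.mpr hc.1)) _
          simp only [hz, lintegral_zero]
      rw [lintegral_congr eq1]
      rw [lintegral_lintegral_swap hHmeas.aemeasurable]
      apply lintegral_congr
      intro τ
      have htrans : ∫⁻ σ, H σ τ = ∫⁻ b, H (b + τ) τ :=
        (lintegral_add_right_eq_self (μ := (volume : Measure ℝ)) (fun σ => H σ τ) τ).symm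
      rw [htrans]
      apply lintegral_congr
      intro b
      simp only [hH, hg]
      by_cases hc : ((0:ℝ) < τ ∧ 0 < b) ∧ τ + b < t
      · have m1 : (0:ℝ) < b + τ := by linarith [hc.1.1, hc.1.2]
        have m2 : b + τ < t := by linarith [hc.2]
        have m3 : τ < b + τ := by linarith [hc.1.2]
        rw [Set.indicator_of_mem (by exact ⟨⟨m1, m2⟩, hc.1.1, m3⟩)]
        rw [Set.indicator_of_mem (by exact hc)]
        rw [show b + τ - τ = b from add_sub_cancel_right b τ,
          show t - (b + τ) = t - τ - b from by ring]
        ring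
      · rw [Set.indicator_of_notMem, Set.indicator_of_notMem (by exact hc)]
        intro hmem
        obtain ⟨⟨h1, h2⟩, h3, h4⟩ := hmem
        have h2' : b + τ < t := h2
        have h3' : (0:ℝ) < τ := h3
        have h4' : τ < b + τ := h4
        exact hc ⟨⟨h3', by linarith⟩, by linarith⟩
    have claimB : (∫⁻ τ in Set.Ioo (0:ℝ) t, Wl G (SimpleGraph.Walk.cons h'' p') τ * Wq (t - τ))
        = ∫⁻ b, ∫⁻ a, g a b := by
      set H₂ : ℝ → ℝ → ℝ≥0∞ := fun τ' σ =>
        {x : ℝ × ℝ | (0 < x.1 ∧ x.1 < t) ∧ (0 < x.2 ∧ x.2 < x.1)}.indicator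
          (fun x => ENNReal.ofReal (Real.exp (-((x.1 - x.2) * D))) * Wp x.2 * Wq (t - x.1))
          (τ', σ) with hH2
      have hH2meas : Measurable (Function.uncurry H₂) := by
        apply Measurable.indicator
        · exact (((Real.measurable_exp.comp
              (((measurable_fst.sub measurable_snd).mul_const D).neg)).ennreal_ofReal).mul
            (hWpm.comp measurable_snd)).mul (hWqm.comp (measurable_const.sub measurable_fst))
        · exact (((measurable_fst measurableSet_Ioi).inter
            (measurableSet_lt measurable_fst measurable_const)).inter
            ((measurable_snd measurableSet_Ioi).inter
              (measurableSet_lt measurable_snd measurable_fst)))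
      have eq2 : (∫⁻ τ' in Set.Ioo (0:ℝ) t, Wl G (SimpleGraph.Walk.cons h'' p') τ' * Wq (t - τ'))
          = ∫⁻ τ', ∫⁻ σ, H₂ τ' σ := by
        rw [← lintegral_indicator measurableSet_Ioo]
        apply lintegral_congr
        intro τ'
        by_cases hτ' : τ' ∈ Set.Ioo (0:ℝ) t
        · rw [Set.indicator_of_mem hτ', Wl_cons, ← hWp, ← hD,
            ← lintegral_mul_const' _ _ (Wl_lt_top G q (t - τ')).ne,
            ← lintegral_indicator measurableSet_Ioo]
          apply lintegral_congr
          intro σ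
          by_cases hσ : σ ∈ Set.Ioo (0:ℝ) τ'
          · rw [Set.indicator_of_mem hσ]
            simp only [hH2]
            rw [Set.indicator_of_mem (by exact ⟨⟨hτ'.1, hτ'.2⟩, ⟨hσ.1, hσ.2⟩⟩)]
          · rw [Set.indicator_of_notMem hσ]
            simp only [hH2]
            rw [Set.indicator_of_notMem (fun hc => hσ (Set.mem_Ioo.mpr hc.2))]
        · rw [Set.indicator_of_notMem hτ']
          have hz : ∀ σ : ℝ, H₂ τ' σ = 0 := by
            intro σ
            simp only [hH2]
            exact Set.indicator_of_notMem (fun hc => hτ' (Set.mem_Ioo.mpr hc.1)) _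
          simp only [hz, lintegral_zero]
      rw [eq2]
      have hΦm : Measurable fun τ' => ∫⁻ σ, H₂ τ' σ :=
        Measurable.lintegral_prod_right (ν := (volume : Measure ℝ)) hH2meas
      have hrefl := (Measure.measurePreserving_sub_left (volume : Measure ℝ) t).lintegral_comp
        (f := fun τ' => ∫⁻ σ, H₂ τ' σ) hΦm
      rw [← hrefl]
      apply lintegral_congr
      intro b
      apply lintegral_congr
      intro σ
      simp only [hH2, hg]
      by_cases hc : ((0:ℝ) < σ ∧ 0 < b) ∧ σ + b < t
      · have m1 : (0:ℝ) < t - b := by linarith [hc.1.1, hc.2]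
        have m2 : t - b < t := by linarith [hc.1.2]
        have m3 : σ < t - b := by linarith [hc.2]
        rw [Set.indicator_of_mem (by exact ⟨⟨m1, m2⟩, hc.1.1, m3⟩)]
        rw [Set.indicator_of_mem (by exact hc)]
        rw [show t - (t - b) = b from sub_sub_cancel t b,
          show t - b - σ = t - σ - b from by ring]
        ring
      · rw [Set.indicator_of_notMem, Set.indicator_of_notMem (by exact hc)]
        intro hmem
        obtain ⟨⟨h1, h2⟩, h3, h4⟩ := hmem
        have h1' : (0:ℝ) < t - b := h1
        have h2' : t - b < t := h2
        have h3' : (0:ℝ) < σ := h3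
        have h4' : σ < t - b := h4
        exact hc ⟨⟨h3', by linarith⟩, by linarith⟩
    rw [claimA, claimB]
    exact lintegral_lintegral_swap hgmeas.aemeasurable

end PWaux

open PWaux in
/-- Path weight factorization: for composable paths `γ₁ = p.concat h` (ending at `w`,
with `γ̄₁ = p` its truncation dropping the last vertex) and `γ₂ = q` (starting at `w`),
`W(γ₁ * γ₂, t) = ∫₀^t W(γ̄₁, τ) W(γ₂, t−τ) dτ`. -/
theorem pathWeight_factorization {V : Type*} [Fintype V] [DecidableEq V]
    (G : SimpleGraph V) [DecidableRel G.Adj] {u w' w v : V}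
    (p : G.Walk u w') (h : G.Adj w' w) (q : G.Walk w v) (t : ℝ) (ht : 0 < t) :
    pathWeight G ((p.concat h).append q) t
      = ∫ τ in Set.Ioo (0:ℝ) t, pathWeight G p τ * pathWeight G q (t - τ) := by
  have hmeas : AEMeasurable (fun τ => Wl G p τ * Wl G q (t - τ))
      (volume.restrict (Set.Ioo (0:ℝ) t)) :=
    ((measurable_Wl G p).mul
      ((measurable_Wl G q).comp (measurable_const.sub measurable_id))).aemeasurable
  have hfin : ∀ᵐ τ ∂(volume.restrict (Set.Ioo (0:ℝ) t)), Wl G p τ * Wl G q (t - τ) < ⊤ :=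
    Filter.Eventually.of_forall fun τ =>
      ENNReal.mul_lt_top (Wl_lt_top G p τ) (Wl_lt_top G q (t - τ))
  have hint := integral_toReal hmeas hfin
  simp_rw [pathWeight_eq_toReal, ← ENNReal.toReal_mul]
  rw [Wl_factor G p h q t]
  exact hint.symm
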